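/- Let P be a path graph on vertices v_0, v_1, ..., v_{m-1} (each internal vertex adjacent to its two neighbors, endpoints to one neighbor) whose vertices are colored with n colors such that every pair of distinct colors appears on at least one pair of adjacent vertices. If the two endpoints v_0 and v_{m-1} have the same color c, then color class c contains at least ⌈(n+1)/2⌉ vertices. -/

import Mathlib

/-- If a path on `m` vertices (given by its sequence of colors `s 0, …, s (m-1)` with
`n` colors) covers every pair of distinct colors on some edge, and the endpoints have
the same color, then that color class has at least `⌈(n+1)/2⌉` vertices. -/
theorem stmt_6 (n m : ℕ) (hn : 2 ≤ n) (hm : 1 ≤ m) (s : ℕ → Fin n)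
    (hcov : ∀ a b : Fin n, a ≠ b → ∃ i : ℕ, i + 1 < m ∧
      ((s i = a ∧ s (i + 1) = b) ∨ (s i = b ∧ s (i + 1) = a)))
    (hend : s 0 = s (m - 1)) :
    (n + 1 + 1) / 2 ≤ ({i : ℕ | i < m ∧ s i = s 0}).ncard := by
  classical
  obtain ⟨i0, hi0, -⟩ := hcov ⟨0, by omega⟩ ⟨1, by omega⟩ (by simp [Fin.ext_iff])
  have hm2 : 2 ≤ m := by omega
  set c := s 0 with hc
  set CF : Finset ℕ := (Finset.range m).filter (fun i => s i = c) with hCF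
  have hset : {i : ℕ | i < m ∧ s i = s 0} = ↑CF := by
    ext i; simp [hCF, ← hc]
  set T : Finset (ℕ × Bool) :=
    ((CF ×ˢ (Finset.univ : Finset Bool)).erase (0, false)).erase (m - 1, true) with hT
  have h0 : (0 : ℕ) ∈ CF := by simp [hCF]; omega
  have hml : m - 1 ∈ CF := by
    simp only [hCF, Finset.mem_filter, Finset.mem_range]
    exact ⟨by omega, hend.symm⟩
  have hmem1 : ((0 : ℕ), false) ∈ CF ×ˢ (Finset.univ : Finset Bool) := by
    simp [Finset.mem_product, h0]
  have hmem2 : ((m - 1 : ℕ), true) ∈ (CF ×ˢ (Finset.univ : Finset Bool)).erase (0, false) := by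
    rw [Finset.mem_erase]
    refine ⟨by simp [Prod.ext_iff], by simp [Finset.mem_product, hml]⟩
  have hTcard : T.card = 2 * CF.card - 2 := by
    rw [hT, Finset.card_erase_of_mem hmem2, Finset.card_erase_of_mem hmem1,
      Finset.card_product, Finset.card_univ, Fintype.card_bool]
    omega
  have key : ∀ a : Fin n, a ≠ c → ∃ p : ℕ × Bool, p ∈ T ∧
      (if p.2 then s (p.1 + 1) else s (p.1 - 1)) = a := by
    intro a ha
    obtain ⟨i, hi, hcase⟩ := hcov c a (Ne.symm ha)
    rcases hcase with ⟨h1, h2⟩ | ⟨h1, h2⟩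
    · refine ⟨(i, true), ?_, by simpa using h2⟩
      have hiCF : i ∈ CF := by
        simp only [hCF, Finset.mem_filter, Finset.mem_range]
        exact ⟨by omega, h1⟩
      rw [hT, Finset.mem_erase, Finset.mem_erase, Finset.mem_product]
      refine ⟨?_, ?_, hiCF, Finset.mem_univ _⟩
      · intro h; rw [Prod.mk.injEq] at h; omega
      · simp
    · refine ⟨(i + 1, false), ?_, by simpa using h1⟩
      have hiCF : i + 1 ∈ CF := by
        simp only [hCF, Finset.mem_filter, Finset.mem_range]
        exact ⟨by omega, h2⟩
      rw [hT, Finset.mem_erase, Finset.mem_erase, Finset.mem_product]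
      refine ⟨?_, ?_, hiCF, Finset.mem_univ _⟩
      · simp
      · intro h; rw [Prod.mk.injEq] at h; omega
  set f : Fin n → ℕ × Bool := fun a =>
    if h : a ≠ c then (key a h).choose else (0, false) with hf
  have hcard : (Finset.univ.erase c).card ≤ T.card := by
    apply Finset.card_le_card_of_injOn f
    · intro a ha
      rw [Finset.mem_coe, Finset.mem_erase] at ha
      simp only [hf, dif_pos ha.1]
      exact ((key a ha.1).choose_spec).1
    · intro a ha b hb hab
      rw [Finset.coe_erase, Set.mem_diff] at ha hb
      have ha' : a ≠ c := by simpa using ha.2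
      have hb' : b ≠ c := by simpa using hb.2
      have e1 := ((key a ha').choose_spec).2
      have e2 := ((key b hb').choose_spec).2
      simp only [hf, dif_pos ha', dif_pos hb'] at hab
      rw [← e1, ← e2, hab]
  have hdc : (Finset.univ.erase c).card = n - 1 := by
    rw [Finset.card_erase_of_mem (Finset.mem_univ c)]
    simp
  have hCFpos : 1 ≤ CF.card := Finset.card_pos.mpr ⟨0, h0⟩ 
  rw [hset, Set.ncard_coe_finset]
  omega
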